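/- Assume F satisfies hypotheses H3 and H4 and the semigroup action (S,X) is F-eventually bounded and eventually compact. Let A ⊆ X be a nonempty compact invariant set. Then A is the global F-attractor for (S,X) if and only if A is a global uniform F-attractor for (S,X), i.e., J(x,F) ≠ ∅ for every x ∈ X and J(X,F) ⊆ A. -/

import Mathlib

open Filter Set Metric Bornology Topology

universe u v

/-- A relation making the index of a net directed (reflexive, transitive, directed). -/
def DirectedLE {ι : Type*} (le : ι → ι → Prop) : Prop :=
  (∀ i, le i i) ∧ (∀ i j k, le i j → le j k → le i k) ∧ ∀ i j, ∃ k, le i k ∧ le j k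

/-- Convergence of a net (indexed by `ι` with order `le`) to a filter:
for every member `V` of the filter, eventually the net lies in `V`. -/
def NetTendsto {ι : Type*} {α : Type*} (le : ι → ι → Prop) (u : ι → α) (L : Filter α) : Prop :=
  ∀ V ∈ L, ∃ i₀, ∀ i, le i₀ i → u i ∈ V

/-- A point is a cluster point of a net, i.e. some subnet converges to it. -/
def NetClusterPt {ι : Type*} {α : Type*} [TopologicalSpace α] (le : ι → ι → Prop)
    (u : ι → α) (p : α) : Prop :=
  ∀ V ∈ nhds p, ∀ i₀, ∃ i, le i₀ i ∧ u i ∈ V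

variable {S : Type u} {X : Type v}

/-- `Y` F-attracts `Z`: for every `ε > 0` there is `A ∈ F` with
`dist (t • z, Y) < ε` for all `t ∈ A`, `z ∈ Z`. -/
def FAttracts [MetricSpace X] (φ : S → X → X) (F : Filter S) (Y Z : Set X) : Prop :=
  ∀ ε : ℝ, 0 < ε → ∃ A ∈ F, ∀ t ∈ A, ∀ z ∈ Z, Metric.infDist (φ t z) Y < ε

/-- `Y` F-absorbs `Z`: there is `A ∈ F` with `t • z ∈ Y` for all `t ∈ A`, `z ∈ Z`. -/
def FAbsorbs (φ : S → X → X) (F : Filter S) (Y Z : Set X) : Prop :=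
  ∃ A ∈ F, ∀ t ∈ A, ∀ z ∈ Z, φ t z ∈ Y

/-- `Y` is invariant: `s • Y = Y` for every `s`. -/
def SInvariant (φ : S → X → X) (Y : Set X) : Prop :=
  ∀ s : S, φ s '' Y = Y

/-- Global F-attractor: nonempty, compact, invariant, attracts every bounded set. -/
def FGlobalAttractor [MetricSpace X] (φ : S → X → X) (F : Filter S) (A : Set X) : Prop :=
  A.Nonempty ∧ IsCompact A ∧ SInvariant φ A ∧
    ∀ Z : Set X, Bornology.IsBounded Z → FAttracts φ F A Z

/-- The ω-limit set `ω(Y,F) = ⋂_{A ∈ F} closure {t • y : t ∈ A, y ∈ Y}`. -/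
def omegaLim [TopologicalSpace X] (φ : S → X → X) (F : Filter S) (Y : Set X) : Set X :=
  ⋂ A ∈ F, closure (Set.image2 φ A Y)

/-- The forward F-prolongational limit set `J(x,F)`: points `y` for which there are nets
`(t_λ)` in `S` and `(x_λ)` in `X` over a common directed set with `t_λ →_F ∞`,
`x_λ → x` and `t_λ • x_λ → y`. -/
def FJSet [TopologicalSpace X] (φ : S → X → X) (F : Filter S) (x : X) : Set X :=
  {y | ∃ (ι : Type (max u v)) (le : ι → ι → Prop) (t : ι → S) (z : ι → X),
    Nonempty ι ∧ DirectedLE le ∧ NetTendsto le t F ∧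
    NetTendsto le z (nhds x) ∧ NetTendsto le (fun i => φ (t i) (z i)) (nhds y)}

/-- F-asymptotic compactness: every net `(t_λ • x_λ)` with `(x_λ)` of bounded range
and `t_λ →_F ∞` has a cluster point (a convergent subnet). -/
def FAsympCompact [MetricSpace X] (φ : S → X → X) (F : Filter S) : Prop :=
  ∀ (ι : Type (max u v)) (le : ι → ι → Prop) (t : ι → S) (z : ι → X),
    Nonempty ι → DirectedLE le → Bornology.IsBounded (Set.range z) →
    NetTendsto le t F →
    ∃ p : X, NetClusterPt le (fun i => φ (t i) (z i)) p

/-- F-eventual boundedness: each bounded `Y` has `A ∈ F` with `A • Y` bounded. -/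
def FEventuallyBounded [MetricSpace X] (φ : S → X → X) (F : Filter S) : Prop :=
  ∀ Y : Set X, Bornology.IsBounded Y → ∃ A ∈ F, Bornology.IsBounded (Set.image2 φ A Y)

/-- F-bounded dissipativity: some bounded `D` F-absorbs every bounded subset. -/
def FBoundedDissipative [MetricSpace X] (φ : S → X → X) (F : Filter S) : Prop :=
  ∃ D : Set X, Bornology.IsBounded D ∧
    ∀ Z : Set X, Bornology.IsBounded Z → FAbsorbs φ F D Z

/-- F-point dissipativity: some bounded `D` F-absorbs every singleton. -/
def FPointDissipative [MetricSpace X] (φ : S → X → X) (F : Filter S) : Prop :=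
  ∃ D : Set X, Bornology.IsBounded D ∧ ∀ x : X, FAbsorbs φ F D {x}

/-- Eventual compactness: some `t ∈ S` maps every bounded set to a relatively compact set. -/
def FEventuallyCompact [MetricSpace X] (φ : S → X → X) : Prop :=
  ∃ t : S, ∀ Y : Set X, Bornology.IsBounded Y → IsCompact (closure (φ t '' Y))

/-- F-limit compactness: for every bounded `B` and `ε > 0` there is `A ∈ F` such that
`A • B` is covered by finitely many balls of radius `ε`. -/
def FLimitCompact [MetricSpace X] (φ : S → X → X) (F : Filter S) : Prop :=
  ∀ B : Set X, Bornology.IsBounded B → ∀ ε : ℝ, 0 < ε →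
    ∃ A ∈ F, ∃ T : Set X, T.Finite ∧ Set.image2 φ A B ⊆ ⋃ c ∈ T, Metric.ball c ε

/-- Hypothesis H₁: for all `s ∈ S`, `A ∈ F` there is `B ∈ F` with `s * B ⊆ A`. -/
def HypH1 [Mul S] (F : Filter S) : Prop :=
  ∀ s : S, ∀ A ∈ F, ∃ B ∈ F, (fun b => s * b) '' B ⊆ A

/-- Hypothesis H₃: for all `s ∈ S`, `A ∈ F` there is `B ∈ F` with `B ⊆ A * s`. -/
def HypH3 [Mul S] (F : Filter S) : Prop :=
  ∀ s : S, ∀ A ∈ F, ∃ B ∈ F, B ⊆ (fun a => a * s) '' A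

/-- Hypothesis H₄: for all `s ∈ S`, `A ∈ F` there is `B ∈ F` with `B ⊆ s * A`. -/
def HypH4 [Mul S] (F : Filter S) : Prop :=
  ∀ s : S, ∀ A ∈ F, ∃ B ∈ F, B ⊆ (fun a => s * a) '' A


section Aux

variable {X : Type v}

lemma listUpper {ι : Type*} {le : ι → ι → Prop} (hdir : DirectedLE le)
    (i₀ : ι) (l : List ι) : ∃ k, le i₀ k ∧ ∀ i ∈ l, le i k := by
  induction l with
  | nil => exact ⟨i₀, hdir.1 i₀, by simp⟩
  | cons a l ih =>
    obtain ⟨k, hk0, hkl⟩ := ih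
    obtain ⟨m, hkm, ham⟩ := hdir.2.2 k a
    refine ⟨m, hdir.2.1 _ _ _ hk0 hkm, ?_⟩
    intro i hi
    rcases List.mem_cons.mp hi with h | h
    · exact h ▸ ham
    · exact hdir.2.1 _ _ _ (hkl i h) hkm

lemma listMin {ι : Type*} (l : List ι) (r : ι → ℝ) (hr : ∀ i ∈ l, 0 < r i) :
    ∃ δ : ℝ, 0 < δ ∧ ∀ i ∈ l, δ ≤ r i := by
  induction l with
  | nil => exact ⟨1, one_pos, by simp⟩
  | cons a l ih =>
    obtain ⟨δ, hδ, hδl⟩ := ih (fun i hi => hr i (List.mem_cons_of_mem a hi))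
    refine ⟨min δ (r a), lt_min hδ (hr a (List.mem_cons_self (a := a) (l := l))), ?_⟩
    intro i hi
    rcases List.mem_cons.mp hi with h | h
    · exact h ▸ min_le_right _ _
    · exact le_trans (min_le_left _ _) (hδl i h)

lemma exists_netClusterPt {ι : Type*} [MetricSpace X] {le : ι → ι → Prop}
    (hdir : DirectedLE le) (u : ι → X) {K : Set X}
    (hK : IsCompact K) (hKne : K.Nonempty)
    (happ : ∀ ε : ℝ, 0 < ε → ∃ i₀, ∀ i, le i₀ i → Metric.infDist (u i) K < ε) :
    ∃ p ∈ K, NetClusterPt le u p := by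
  by_contra hcon
  push_neg at hcon
  have hιne : Nonempty ι := ⟨(happ 1 one_pos).choose⟩
  have key : ∀ p : X, ∃ r, 0 < r ∧ ∃ j, ∀ i, le j i → p ∈ K → u i ∉ Metric.ball p r := by
    intro p
    by_cases hp : p ∈ K
    · have h1 := hcon p hp
      unfold NetClusterPt at h1
      push_neg at h1
      obtain ⟨V, hV, j, hj⟩ := h1
      obtain ⟨r, hr, hball⟩ := Metric.mem_nhds_iff.mp hV
      exact ⟨r, hr, j, fun i hle _ hball' => hj i hle (hball hball')⟩
    · exact ⟨1, one_pos, hιne.some, fun i _ hpK => absurd hpK hp⟩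
  choose r hr j hj using key
  obtain ⟨t, htK, hcover⟩ := hK.elim_nhds_subcover (fun p => Metric.ball p (r p / 2))
    (fun p hp => Metric.ball_mem_nhds p (by linarith [hr p]))
  obtain ⟨δ, hδ, hδle⟩ := listMin t.toList (fun p => r p / 2)
    (fun p hp => by have := hr p; linarith)
  obtain ⟨i₀, hi₀⟩ := happ δ hδ
  obtain ⟨k, hk1, hk2⟩ := listUpper hdir i₀ (t.toList.map j)
  have h2 : Metric.infDist (u k) K < δ := hi₀ k hk1
  obtain ⟨apt, haK, hda⟩ := (Metric.infDist_lt_iff hKne).mp h2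
  have hmem := hcover haK
  simp only [Set.mem_iUnion] at hmem
  obtain ⟨p, hpt, hp⟩ := hmem
  have hpK := htK p hpt
  have hrd : dist (u k) p < r p := by
    have h3 := Metric.mem_ball.mp hp
    have h4 : δ ≤ r p / 2 := hδle p (Finset.mem_toList.mpr hpt)
    calc dist (u k) p ≤ dist (u k) apt + dist apt p := dist_triangle _ _ _
      _ < δ + r p / 2 := add_lt_add hda h3
      _ ≤ r p := by linarith
  exact hj p k (hk2 (j p) (List.mem_map.mpr ⟨p, Finset.mem_toList.mpr hpt, rfl⟩)) hpK
    (Metric.mem_ball.mpr hrd)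

/-- Index type for the canonical subnet converging to a cluster point. -/
def SubIdx {ι : Type*} [TopologicalSpace X] (u : ι → X) (p : X) :=
  {q : ι × Set X // q.2 ∈ nhds p ∧ u q.1 ∈ q.2}

/-- The order on `SubIdx`. -/
def subLe {ι : Type*} [TopologicalSpace X] (le : ι → ι → Prop) (u : ι → X) (p : X) :
    SubIdx u p → SubIdx u p → Prop :=
  fun a b => le a.1.1 b.1.1 ∧ b.1.2 ⊆ a.1.2

lemma subnet_spec {ι : Type*} [TopologicalSpace X] {le : ι → ι → Prop}
    (hne : Nonempty ι) (hdir : DirectedLE le) {u : ι → X} {p : X}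
    (hp : NetClusterPt le u p) :
    Nonempty (SubIdx u p) ∧ DirectedLE (subLe le u p) ∧
      NetTendsto (subLe le u p) (fun q : SubIdx u p => u q.1.1) (nhds p) ∧
      ∀ i₀ : ι, ∃ j₀ : SubIdx u p, ∀ j, subLe le u p j₀ j → le i₀ j.1.1 := by
  obtain ⟨i⟩ := hne
  refine ⟨⟨⟨(i, Set.univ), Filter.univ_mem, Set.mem_univ _⟩⟩, ⟨?_, ?_, ?_⟩, ?_, ?_⟩
  · exact fun q => ⟨hdir.1 _, subset_rfl⟩
  · exact fun a b c hab hbc => ⟨hdir.2.1 _ _ _ hab.1 hbc.1, hbc.2.trans hab.2⟩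
  · intro a b
    obtain ⟨k, hak, hbk⟩ := hdir.2.2 a.1.1 b.1.1
    obtain ⟨m, hkm, hm⟩ := hp (a.1.2 ∩ b.1.2) (Filter.inter_mem a.2.1 b.2.1) k
    exact ⟨⟨(m, a.1.2 ∩ b.1.2), Filter.inter_mem a.2.1 b.2.1, hm⟩,
      ⟨hdir.2.1 _ _ _ hak hkm, Set.inter_subset_left⟩,
      ⟨hdir.2.1 _ _ _ hbk hkm, Set.inter_subset_right⟩⟩
  · intro V hV
    obtain ⟨m, _, hm⟩ := hp V hV i
    exact ⟨⟨(m, V), hV, hm⟩, fun j hj => hj.2 j.2.2⟩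
  · intro i₀
    obtain ⟨m, him, hm⟩ := hp Set.univ Filter.univ_mem i₀
    exact ⟨⟨(m, Set.univ), Filter.univ_mem, hm⟩, fun j hj => hdir.2.1 _ _ _ him hj.1⟩

lemma netTendsto_comp {ι κ : Type*} {le : ι → ι → Prop} {le' : κ → κ → Prop} {h : κ → ι}
    (hcof : ∀ i₀, ∃ j₀, ∀ j, le' j₀ j → le i₀ (h j)) {α : Type*} {v : ι → α} {L : Filter α}
    (hv : NetTendsto le v L) : NetTendsto le' (fun j => v (h j)) L := by
  intro V hV
  obtain ⟨i₀, hi₀⟩ := hv V hV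
  obtain ⟨j₀, hj₀⟩ := hcof i₀
  exact ⟨j₀, fun j hj => hi₀ _ (hj₀ j hj)⟩

end Aux

/-- under H₃, H₄, F-eventual boundedness and eventual compactness, a nonempty
compact invariant set is the global F-attractor iff it is a global uniform F-attractor. -/
theorem global_attractor_iff_uniform
    {S : Type u} {X : Type v} [Semigroup S] [MetricSpace X]
    (φ : S → X → X) (F : Filter S) [Filter.NeBot F]
    (hact : ∀ (s t : S) (x : X), φ (s * t) x = φ s (φ t x))
    (hcont : ∀ s : S, Continuous (φ s))
    (h3 : HypH3 F) (h4 : HypH4 F)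
    (heb : FEventuallyBounded φ F) (hec : FEventuallyCompact φ)
    (A : Set X) (hne : A.Nonempty) (hcpt : IsCompact A) (hinv : SInvariant φ A) :
    FGlobalAttractor φ F A ↔
      ((∀ x : X, (FJSet φ F x).Nonempty) ∧ (⋃ x : X, FJSet φ F x) ⊆ A) := by
  constructor
  · rintro ⟨-, -, -, hatt⟩
    constructor
    · -- `J(x,F)` is nonempty for every `x`
      intro x
      have hattx := hatt {x} Bornology.isBounded_singleton
      let ι₀ := {q : Set S × ℝ // q.1 ∈ F ∧ 0 < q.2}
      let le₀ : ι₀ → ι₀ → Prop := fun a b => b.1.1 ⊆ a.1.1 ∧ b.1.2 ≤ a.1.2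
      have hdir₀ : DirectedLE le₀ := ⟨fun i => ⟨subset_rfl, le_rfl⟩,
        fun a b c hab hbc => ⟨hbc.1.trans hab.1, hbc.2.trans hab.2⟩,
        fun a b => ⟨⟨(a.1.1 ∩ b.1.1, min a.1.2 b.1.2), Filter.inter_mem a.2.1 b.2.1,
            lt_min a.2.2 b.2.2⟩,
          ⟨Set.inter_subset_left, min_le_left _ _⟩,
          ⟨Set.inter_subset_right, min_le_right _ _⟩⟩⟩
      have hne₀ : Nonempty ι₀ := ⟨⟨(Set.univ, 1), Filter.univ_mem, one_pos⟩⟩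
      have hsel : ∀ q : ι₀, ∃ τ : S, τ ∈ q.1.1 ∧ Metric.infDist (φ τ x) A < q.1.2 := by
        intro q
        obtain ⟨B, hB, hBp⟩ := hattx q.1.2 q.2.2
        obtain ⟨τ, hτ1, hτ2⟩ := Filter.nonempty_of_mem (Filter.inter_mem q.2.1 hB)
        exact ⟨τ, hτ1, hBp τ hτ2 x rfl⟩
      choose T hT1 hT2 using hsel
      have happ : ∀ ε : ℝ, 0 < ε →
          ∃ i₀ : ι₀, ∀ i, le₀ i₀ i → Metric.infDist (φ (T i) x) A < ε := by
        intro ε hε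
        exact ⟨⟨(Set.univ, ε), Filter.univ_mem, hε⟩, fun i hi => lt_of_lt_of_le (hT2 i) hi.2⟩
      obtain ⟨p, hpA, hclus⟩ := exists_netClusterPt hdir₀ (fun q => φ (T q) x) hcpt hne happ
      obtain ⟨hne₂, hdir₂, htend₂, hcof₂⟩ := subnet_spec hne₀ hdir₀ hclus
      refine ⟨p, SubIdx (fun q : ι₀ => φ (T q) x) p, subLe le₀ _ p, fun j => T j.1.1,
        fun _ => x, hne₂, hdir₂, ?_, ?_, htend₂⟩
      · refine netTendsto_comp hcof₂ ?_
        intro V hV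
        exact ⟨⟨(V, 1), hV, one_pos⟩, fun i hi => hi.1 (hT1 i)⟩
      · intro V hV
        exact ⟨hne₂.some, fun i _ => mem_of_mem_nhds hV⟩
    · -- `J(X,F) ⊆ A`
      intro y hy
      simp only [Set.mem_iUnion, FJSet, Set.mem_setOf_eq] at hy
      obtain ⟨x, ι, le, t, z, hιne, hdir, htF, hzx, hty⟩ := hy
      by_contra hyA
      have hpos : 0 < Metric.infDist y A := (hcpt.isClosed.notMem_iff_infDist_pos hne).mp hyA
      set ε := Metric.infDist y A / 2 with hεdef
      obtain ⟨B, hB, hBp⟩ := hatt (Metric.closedBall x 1) Metric.isBounded_closedBall ε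
        (by linarith)
      obtain ⟨i₁, hi₁⟩ := htF B hB
      obtain ⟨i₂, hi₂⟩ := hzx (Metric.ball x 1) (Metric.ball_mem_nhds x one_pos)
      obtain ⟨i₃, hi₃⟩ := hty (Metric.ball y ε) (Metric.ball_mem_nhds y (by linarith))
      obtain ⟨k, hk1, hk2⟩ := listUpper hdir i₁ [i₂, i₃]
      have e1 : Metric.infDist (φ (t k) (z k)) A < ε :=
        hBp (t k) (hi₁ k hk1) (z k)
          (Metric.ball_subset_closedBall (hi₂ k (hk2 i₂ (by simp))))
      have e2 : dist y (φ (t k) (z k)) < ε := by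
        have h5 := Metric.mem_ball.mp (hi₃ k (hk2 i₃ (by simp)))
        rw [dist_comm]; exact h5
      have e3 : Metric.infDist y A ≤ Metric.infDist (φ (t k) (z k)) A
          + dist y (φ (t k) (z k)) := Metric.infDist_le_infDist_add_dist
      linarith
  · rintro ⟨hJne, hJA⟩
    refine ⟨hne, hcpt, hinv, ?_⟩
    intro Z hZ
    by_contra hcon
    unfold FAttracts at hcon
    push_neg at hcon
    obtain ⟨ε, hε, hcon⟩ := hcon
    obtain ⟨s, hs⟩ := hec
    let ι₁ := {B : Set S // B ∈ F}
    let le₁ : ι₁ → ι₁ → Prop := fun a b => b.1 ⊆ a.1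
    have hdir₁ : DirectedLE le₁ := ⟨fun i => subset_rfl, fun a b c h1 h2 => h2.trans h1,
      fun a b => ⟨⟨a.1 ∩ b.1, Filter.inter_mem a.2 b.2⟩, Set.inter_subset_left,
        Set.inter_subset_right⟩⟩
    have hne₁ : Nonempty ι₁ := ⟨⟨Set.univ, Filter.univ_mem⟩⟩
    have hsel : ∀ q : ι₁, ∃ (a : S) (z : X),
        a ∈ q.1 ∧ z ∈ Z ∧ ε ≤ Metric.infDist (φ (a * s) z) A := by
      intro q
      obtain ⟨B', hB', hB'sub⟩ := h3 s q.1 q.2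
      obtain ⟨t', ht'B', z, hz, hd⟩ := hcon B' hB'
      obtain ⟨a, haB, has⟩ := hB'sub ht'B'
      have has' : a * s = t' := has
      exact ⟨a, z, haB, hz, by rw [has']; exact hd⟩
    choose a zf ha hz hdist using hsel
    let w : ι₁ → X := fun q => φ s (zf q)
    have hKcpt := hs Z hZ
    have hwK : ∀ q, w q ∈ closure (φ s '' Z) := fun q => subset_closure ⟨zf q, hz q, rfl⟩
    have hKne : (closure (φ s '' Z)).Nonempty := ⟨w ⟨Set.univ, Filter.univ_mem⟩, hwK _⟩
    obtain ⟨x, hxK, hclw⟩ := exists_netClusterPt hdir₁ w hKcpt hKne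
      (fun ε' hε' => ⟨⟨Set.univ, Filter.univ_mem⟩, fun i _ => by
        rw [Metric.infDist_zero_of_mem (hwK i)]; exact hε'⟩)
    obtain ⟨hne₂, hdir₂, hwx, hcof₂⟩ := subnet_spec hne₁ hdir₁ hclw
    let le₂ := subLe le₁ w x
    let a₂ : SubIdx w x → S := fun q => a q.1.1
    have haF : NetTendsto le₁ a F := fun V hV => ⟨⟨V, hV⟩, fun i hi => hi (ha i)⟩
    have ha₂F : NetTendsto le₂ a₂ F :=
      netTendsto_comp hcof₂ haF
    let u₂ : SubIdx w x → X := fun q => φ (a₂ q) (w q.1.1)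
    have hdu : ∀ q : SubIdx w x, ε ≤ Metric.infDist (u₂ q) A := by
      intro q
      have hq : u₂ q = φ (a q.1.1 * s) (zf q.1.1) := by
        show φ (a q.1.1) (φ s (zf q.1.1)) = _
        rw [hact]
      rw [hq]; exact hdist q.1.1
    obtain ⟨C, hC, hCb⟩ := heb _ hKcpt.isBounded
    obtain ⟨C', hC', hC'sub⟩ := h4 s C hC
    have hK'cpt := hs _ hCb
    obtain ⟨l₀, hl₀⟩ := ha₂F C' hC'
    have htail : ∀ q, le₂ l₀ q →
        u₂ q ∈ closure (φ s '' Set.image2 φ C (closure (φ s '' Z))) := by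
      intro q hq
      obtain ⟨c, hc, hcs⟩ := hC'sub (hl₀ q hq)
      have hcs' : s * c = a₂ q := hcs
      have hq2 : u₂ q = φ s (φ c (w q.1.1)) := by
        have hq1 : u₂ q = φ (s * c) (w q.1.1) := by
          show φ (a₂ q) (w q.1.1) = _
          rw [hcs']
        rw [hq1, hact]
      rw [hq2]
      exact subset_closure ⟨φ c (w q.1.1), Set.mem_image2_of_mem hc (hwK q.1.1), rfl⟩
    have hK'ne : (closure (φ s '' Set.image2 φ C (closure (φ s '' Z)))).Nonempty :=
      ⟨u₂ l₀, htail l₀ (hdir₂.1 l₀)⟩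
    obtain ⟨y, hyK', hcluy⟩ := exists_netClusterPt hdir₂ u₂ hK'cpt hK'ne
      (fun ε' hε' => ⟨l₀, fun i hi => by
        rw [Metric.infDist_zero_of_mem (htail i hi)]; exact hε'⟩)
    obtain ⟨hne₃, hdir₃, huy, hcof₃⟩ := subnet_spec hne₂ hdir₂ hcluy
    have hyJ : y ∈ FJSet φ F x :=
      ⟨SubIdx u₂ y, subLe le₂ u₂ y, fun q => a₂ q.1.1, fun q => w q.1.1.1.1,
        hne₃, hdir₃, netTendsto_comp hcof₃ ha₂F,
        netTendsto_comp hcof₃ hwx, huy⟩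
    have hyA : y ∈ A := hJA (Set.mem_iUnion.mpr ⟨x, hyJ⟩)
    obtain ⟨j₀, hj₀⟩ := huy (Metric.ball y (ε / 2)) (Metric.ball_mem_nhds y (by linarith))
    have h1 : dist (u₂ j₀.1.1) y < ε / 2 := Metric.mem_ball.mp (hj₀ j₀ (hdir₃.1 j₀))
    have h2 : ε ≤ Metric.infDist (u₂ j₀.1.1) A := hdu j₀.1.1
    have h3' : Metric.infDist (u₂ j₀.1.1) A ≤ Metric.infDist y A + dist (u₂ j₀.1.1) y :=
      Metric.infDist_le_infDist_add_dist
    rw [Metric.infDist_zero_of_mem hyA] at h3'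
    linarith
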